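/- Let X be a linearly ordered set with a least element 0. Define a⊞b = {max(a,b)} if a ≠ b, and a⊞a = {x ∈ X : x ≤ a}. Then (X, ⊞) is a commutative multigroup with neutral element 0 in which every element is its own inverse. -/

import Mathlib

/-- Elementwise extension of a multivalued binary operation to subsets. -/
def setOp {X : Type*} (m : X → X → Set X) (A B : Set X) : Set X :=
  ⋃ a ∈ A, ⋃ b ∈ B, m a b

/-- A commutative multigroup with neutral element `zero` and inverse map `neg`. -/
structure IsCommMultigroup {X : Type*} (m : X → X → Set X) (zero : X) (neg : X → X) : Prop where
  nonempty : ∀ a b, (m a b).Nonempty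
  comm : ∀ a b, m a b = m b a
  assoc : ∀ a b c, setOp m (m a b) {c} = setOp m {a} (m b c)
  zero_add : ∀ a, m zero a = {a}
  neg_mem : ∀ a, zero ∈ m a (neg a)
  neg_unique : ∀ a b, zero ∈ m a b → b = neg a

section Aux

variable {X : Type*} [LinearOrder X]

private def mg (a b : X) : Set X := if a ≠ b then {max a b} else {x : X | x ≤ a}

private lemma mem_mg {a b x : X} :
    x ∈ mg a b ↔ (a ≠ b ∧ x = max a b) ∨ (a = b ∧ x ≤ a) := by
  unfold mg
  split <;> simp_all

private lemma mg_comm (a b : X) : mg a b = mg b a := by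
  unfold mg
  rcases eq_or_ne a b with h | h
  · subst h; simp
  · simp [h, h.symm, max_comm]

private lemma setOp_mg_comm (A B : Set X) : setOp mg A B = setOp mg B A := by
  ext x
  simp only [setOp, Set.mem_iUnion]
  constructor <;> rintro ⟨a, ha, b, hb, h⟩ <;> exact ⟨b, hb, a, ha, by rwa [mg_comm]⟩

private lemma mem_setOp_singleton {a x : X} {S : Set X} :
    x ∈ setOp mg {a} S ↔ ∃ y ∈ S, x ∈ mg a y := by
  simp [setOp]

private lemma mg_self (a : X) : mg a a = {x : X | x ≤ a} := if_neg (by simp)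

private lemma mg_of_ne {a b : X} (h : a ≠ b) : mg a b = {max a b} := if_pos h

private lemma mem_mg_of_le {x a : X} (h : x ≤ a) : x ∈ mg a a := by
  rw [mg_self]; exact h

private lemma mg_subset (a b : X) : mg a b ⊆ {x : X | x ≤ max a b} := by
  intro x hx
  rcases mem_mg.mp hx with ⟨-, rfl⟩ | ⟨rfl, h⟩
  · exact le_refl _
  · simpa using h

private lemma setOp_singleton_singleton (a d : X) : setOp mg {a} {d} = mg a d := by
  simp [setOp]

private lemma key (a b c : X) :
    setOp mg {a} (mg b c) =
      if a = b ∧ c ≤ a ∨ a = c ∧ b ≤ a ∨ b = c ∧ a ≤ b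
      then {x : X | x ≤ max a (max b c)} else {max a (max b c)} := by
  by_cases hbc : b = c
  · subst hbc
    rw [mg_self]
    rcases le_or_gt a b with hab | hab
    · rw [if_pos (Or.inr (Or.inr ⟨rfl, hab⟩)), max_self, max_eq_right hab]
      ext x
      rw [mem_setOp_singleton]
      constructor
      · rintro ⟨y, hy, hxy⟩
        have h1 : x ≤ max a y := mg_subset a y hxy
        exact h1.trans (max_le hab hy)
      · intro hx
        rcases le_or_gt x a with h | h
        · exact ⟨a, hab, mem_mg_of_le h⟩
        · refine ⟨x, hx, ?_⟩
          rw [mg_of_ne h.ne, max_eq_right h.le]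
          rfl
    · rw [if_neg, max_self, max_eq_left hab.le]
      · ext x
        rw [mem_setOp_singleton]
        constructor
        · rintro ⟨y, hy, hxy⟩
          have hya : a ≠ y := fun h => ((h ▸ hy).trans_lt hab).false
          rw [mg_of_ne hya, max_eq_left ((Set.mem_setOf_eq ▸ hy).trans hab.le)] at hxy
          exact hxy
        · rintro rfl
          refine ⟨b, le_refl b, ?_⟩
          rw [mg_of_ne hab.ne', max_eq_left hab.le]
          rfl
      · rintro (⟨h1, -⟩ | ⟨h1, -⟩ | ⟨-, h⟩)
        · exact hab.ne' h1
        · exact hab.ne' h1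
        · exact (not_le_of_gt hab) h
  · rw [mg_of_ne hbc]
    by_cases had : a = max b c
    · have hcond : a = b ∧ c ≤ a ∨ a = c ∧ b ≤ a ∨ b = c ∧ a ≤ b := by
        rcases max_cases b c with ⟨h1, h2⟩ | ⟨h1, h2⟩
        · exact Or.inl ⟨had.trans h1, h2.trans (had.trans h1).ge⟩
        · exact Or.inr (Or.inl ⟨had.trans h1, h2.le.trans (had.trans h1).ge⟩)
      rw [if_pos hcond, setOp_singleton_singleton, ← had, max_self, mg_self]
    · have hcond : ¬(a = b ∧ c ≤ a ∨ a = c ∧ b ≤ a ∨ b = c ∧ a ≤ b) := by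
        rintro (⟨rfl, h⟩ | ⟨rfl, h⟩ | ⟨h, -⟩)
        · exact had (max_eq_left h).symm
        · exact had (max_eq_right h).symm
        · exact hbc h
      rw [if_neg hcond, setOp_singleton_singleton, mg_of_ne had]

end Aux

/-- on a linearly ordered set with least element `zero`,
the operation `a⊞b = {max a b}` for `a ≠ b`, `a⊞a = {x : x ≤ a}` is a
commutative multigroup with neutral element `zero` in which every element
is its own inverse. -/
theorem linearOrder_multigroup {X : Type*} [LinearOrder X] (zero : X)
    (h0 : ∀ x, zero ≤ x) :
    IsCommMultigroup
      (fun a b => if a ≠ b then {max a b} else {x : X | x ≤ a}) zero id := by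
  show IsCommMultigroup mg zero id
  constructor
  · intro a b
    unfold mg
    split
    · exact ⟨max a b, rfl⟩
    · exact ⟨a, le_refl a⟩
  · exact mg_comm
  · intro a b c
    rw [setOp_mg_comm, key, key]
    have hmax : max c (max a b) = max a (max b c) := by
      rw [max_comm, max_assoc]
    have hcond : (c = a ∧ b ≤ c ∨ c = b ∧ a ≤ c ∨ a = b ∧ c ≤ a) ↔
        (a = b ∧ c ≤ a ∨ a = c ∧ b ≤ a ∨ b = c ∧ a ≤ b) := by
      constructor <;> rintro (⟨h1, h2⟩ | ⟨h1, h2⟩ | ⟨h1, h2⟩) <;> subst h1 <;> tauto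
    rw [hmax]
    by_cases h : a = b ∧ c ≤ a ∨ a = c ∧ b ≤ a ∨ b = c ∧ a ≤ b
    · rw [if_pos h, if_pos (hcond.mpr h)]
    · rw [if_neg h, if_neg (fun hh => h (hcond.mp hh))]
  · intro a
    unfold mg
    rcases eq_or_ne zero a with rfl | h
    · simp only [ne_eq, not_true_eq_false, if_neg, ite_false]
      ext x
      simp only [Set.mem_setOf_eq, Set.mem_singleton_iff]
      exact ⟨fun hx => le_antisymm hx (h0 x), fun hx => hx.le⟩
    · simp [h, max_eq_right (h0 a)]
  · intro a
    simp only [id]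
    unfold mg
    simp [h0 a]
  · intro a b hz
    rw [mem_mg] at hz
    rcases hz with ⟨hab, hz⟩ | ⟨rfl, -⟩
    · have ha : a ≤ zero := hz ▸ le_max_left a b
      have hb : b ≤ zero := hz ▸ le_max_right a b
      exact absurd ((le_antisymm ha (h0 a)).trans (le_antisymm hb (h0 b)).symm) hab
    · rfl
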